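/- Every embedding σ of the graph G = C₃ ∪ C₄ in its complement yields the same graph G ⊕ σ(G) up to isomorphism; that is, C₃ ∪ C₄ is uniquely embeddable, and moreover it does admit at least one embedding. -/

import Mathlib

open SimpleGraph

/-- The cycle graph on `ZMod n`: `i` and `j` adjacent iff they differ by one. -/
def CycGraph (n : ℕ) : SimpleGraph (ZMod n) where
  Adj i j := i ≠ j ∧ (i = j + 1 ∨ j = i + 1)
  symm := by constructor; rintro i j ⟨hne, h⟩; exact ⟨hne.symm, h.symm⟩
  loopless := by constructor; rintro i ⟨hne, _⟩; exact hne rfl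

/-- `σ` is an embedding of `G` into its complement. -/
def IsGraphEmbedding {V : Type*} (G : SimpleGraph V) (σ : Equiv.Perm V) : Prop :=
  ∀ x y, G.Adj x y → ¬ G.Adj (σ x) (σ y)

/-- The edge sum `G ⊕ σ(G)`. -/
def EdgeSum {V : Type*} (G : SimpleGraph V) (σ : Equiv.Perm V) : SimpleGraph V :=
  G ⊔ G.map σ.toEmbedding

/-- Vertex-disjoint union of two graphs. -/
def DisjUnion {α β : Type*} (G : SimpleGraph α) (H : SimpleGraph β) :
    SimpleGraph (α ⊕ β) where
  Adj x y :=
    (∃ a b, x = Sum.inl a ∧ y = Sum.inl b ∧ G.Adj a b) ∨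
    (∃ a b, x = Sum.inr a ∧ y = Sum.inr b ∧ H.Adj a b)
  symm := by
    constructor
    rintro x y (⟨a, b, rfl, rfl, h⟩ | ⟨a, b, rfl, rfl, h⟩)
    · exact Or.inl ⟨b, a, rfl, rfl, h.symm⟩
    · exact Or.inr ⟨b, a, rfl, rfl, h.symm⟩
  loopless := by
    constructor
    rintro x (⟨a, b, rfl, h, hadj⟩ | ⟨a, b, rfl, h, hadj⟩) <;>
      · cases h; exact hadj.ne rfl

/- ### Auxiliary setup -/

abbrev Vt := ZMod 3 ⊕ ZMod 4
def Gg : SimpleGraph Vt := DisjUnion (CycGraph 3) (CycGraph 4)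

instance (n : ℕ) : DecidableRel (CycGraph n).Adj := fun i j =>
  decidable_of_iff (i ≠ j ∧ (i = j + 1 ∨ j = i + 1)) Iff.rfl
instance : DecidableRel Gg.Adj := fun x y =>
  decidable_of_iff ((∃ a b, x = Sum.inl a ∧ y = Sum.inl b ∧ (CycGraph 3).Adj a b) ∨
    (∃ a b, x = Sum.inr a ∧ y = Sum.inr b ∧ (CycGraph 4).Adj a b)) Iff.rfl
instance : DecidableRel Ggᶜ.Adj := fun x y =>
  decidable_of_iff (x ≠ y ∧ ¬ Gg.Adj x y) Iff.rfl
instance (σ : Equiv.Perm Vt) : Decidable (IsGraphEmbedding Gg σ) :=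
  decidable_of_iff (∀ x y, Gg.Adj x y → ¬ Gg.Adj (σ x) (σ y)) Iff.rfl

def ofIdx : Fin 7 → Vt :=
  ![.inl 0, .inl 1, .inl 2, .inr 0, .inr 1, .inr 2, .inr 3]
def toIdx : Vt → Fin 7
  | .inl a => ⟨a.val, by have := a.val_lt; omega⟩
  | .inr a => ⟨a.val + 3, by have := a.val_lt; omega⟩

/-- Adjacency table of `C₃ ∪ C₄` under the indexing `ofIdx`. -/
def adjB : Fin 7 → Fin 7 → Bool :=
  ![![false,true,true,false,false,false,false],
    ![true,false,true,false,false,false,false],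
    ![true,true,false,false,false,false,false],
    ![false,false,false,false,true,false,true],
    ![false,false,false,true,false,true,false],
    ![false,false,false,false,true,false,true],
    ![false,false,false,true,false,true,false]]
def compB (i j : Fin 7) : Bool := i != j && !(adjB i j)

/-- Six isomorphism tables onto the complement. -/
def tblT : Fin 6 -> Fin 7 -> Fin 7 :=
  ![![0,3,5,4,1,6,2], ![0,3,5,1,4,2,6], ![3,0,5,4,1,6,2],
    ![3,0,5,1,4,2,6], ![3,5,0,4,1,6,2], ![3,5,0,1,4,2,6]]
def tauF (i : Fin 6) : Vt -> Vt := fun v => ofIdx (tblT i (toIdx v))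

set_option maxRecDepth 100000 in
set_option synthInstance.maxHeartbeats 0 in
set_option synthInstance.maxSize 100000 in
set_option maxHeartbeats 16000000 in
theorem keyTab0 : ∀ b1 : Fin 7, b1 ≠ 0 → ∀ b2 : Fin 7, b2 ≠ 0 ∧ b2 ≠ b1 →
    ∀ b3 : Fin 7, b3 ≠ 0 ∧ b3 ≠ b1 ∧ b3 ≠ b2 →
    ∀ b4 : Fin 7, b4 ≠ 0 ∧ b4 ≠ b1 ∧ b4 ≠ b2 ∧ b4 ≠ b3 →
    ∀ b5 : Fin 7, b5 ≠ 0 ∧ b5 ≠ b1 ∧ b5 ≠ b2 ∧ b5 ≠ b3 ∧ b5 ≠ b4 →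
    ∀ b6 : Fin 7, b6 ≠ 0 ∧ b6 ≠ b1 ∧ b6 ≠ b2 ∧ b6 ≠ b3 ∧ b6 ≠ b4 ∧ b6 ≠ b5 →
    (∀ x y, adjB (![0,b1,b2,b3,b4,b5,b6] x) (![0,b1,b2,b3,b4,b5,b6] y) → ¬ adjB x y) →
    ∃ i : Fin 6, ∀ x y,
      (adjB x y || adjB (![0,b1,b2,b3,b4,b5,b6] x) (![0,b1,b2,b3,b4,b5,b6] y))
        = compB (tblT i x) (tblT i y) := by decide

set_option maxRecDepth 100000 in
set_option synthInstance.maxHeartbeats 0 in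
set_option synthInstance.maxSize 100000 in
set_option maxHeartbeats 16000000 in
theorem keyTab1 : ∀ b1 : Fin 7, b1 ≠ 1 → ∀ b2 : Fin 7, b2 ≠ 1 ∧ b2 ≠ b1 →
    ∀ b3 : Fin 7, b3 ≠ 1 ∧ b3 ≠ b1 ∧ b3 ≠ b2 →
    ∀ b4 : Fin 7, b4 ≠ 1 ∧ b4 ≠ b1 ∧ b4 ≠ b2 ∧ b4 ≠ b3 →
    ∀ b5 : Fin 7, b5 ≠ 1 ∧ b5 ≠ b1 ∧ b5 ≠ b2 ∧ b5 ≠ b3 ∧ b5 ≠ b4 →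
    ∀ b6 : Fin 7, b6 ≠ 1 ∧ b6 ≠ b1 ∧ b6 ≠ b2 ∧ b6 ≠ b3 ∧ b6 ≠ b4 ∧ b6 ≠ b5 →
    (∀ x y, adjB (![1,b1,b2,b3,b4,b5,b6] x) (![1,b1,b2,b3,b4,b5,b6] y) → ¬ adjB x y) →
    ∃ i : Fin 6, ∀ x y,
      (adjB x y || adjB (![1,b1,b2,b3,b4,b5,b6] x) (![1,b1,b2,b3,b4,b5,b6] y))
        = compB (tblT i x) (tblT i y) := by decide

set_option maxRecDepth 100000 in
set_option synthInstance.maxHeartbeats 0 in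
set_option synthInstance.maxSize 100000 in
set_option maxHeartbeats 16000000 in
theorem keyTab2 : ∀ b1 : Fin 7, b1 ≠ 2 → ∀ b2 : Fin 7, b2 ≠ 2 ∧ b2 ≠ b1 →
    ∀ b3 : Fin 7, b3 ≠ 2 ∧ b3 ≠ b1 ∧ b3 ≠ b2 →
    ∀ b4 : Fin 7, b4 ≠ 2 ∧ b4 ≠ b1 ∧ b4 ≠ b2 ∧ b4 ≠ b3 →
    ∀ b5 : Fin 7, b5 ≠ 2 ∧ b5 ≠ b1 ∧ b5 ≠ b2 ∧ b5 ≠ b3 ∧ b5 ≠ b4 →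
    ∀ b6 : Fin 7, b6 ≠ 2 ∧ b6 ≠ b1 ∧ b6 ≠ b2 ∧ b6 ≠ b3 ∧ b6 ≠ b4 ∧ b6 ≠ b5 →
    (∀ x y, adjB (![2,b1,b2,b3,b4,b5,b6] x) (![2,b1,b2,b3,b4,b5,b6] y) → ¬ adjB x y) →
    ∃ i : Fin 6, ∀ x y,
      (adjB x y || adjB (![2,b1,b2,b3,b4,b5,b6] x) (![2,b1,b2,b3,b4,b5,b6] y))
        = compB (tblT i x) (tblT i y) := by decide

set_option maxRecDepth 100000 in
set_option synthInstance.maxHeartbeats 0 in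
set_option synthInstance.maxSize 100000 in
set_option maxHeartbeats 16000000 in
theorem keyTab3 : ∀ b1 : Fin 7, b1 ≠ 3 → ∀ b2 : Fin 7, b2 ≠ 3 ∧ b2 ≠ b1 →
    ∀ b3 : Fin 7, b3 ≠ 3 ∧ b3 ≠ b1 ∧ b3 ≠ b2 →
    ∀ b4 : Fin 7, b4 ≠ 3 ∧ b4 ≠ b1 ∧ b4 ≠ b2 ∧ b4 ≠ b3 →
    ∀ b5 : Fin 7, b5 ≠ 3 ∧ b5 ≠ b1 ∧ b5 ≠ b2 ∧ b5 ≠ b3 ∧ b5 ≠ b4 →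
    ∀ b6 : Fin 7, b6 ≠ 3 ∧ b6 ≠ b1 ∧ b6 ≠ b2 ∧ b6 ≠ b3 ∧ b6 ≠ b4 ∧ b6 ≠ b5 →
    (∀ x y, adjB (![3,b1,b2,b3,b4,b5,b6] x) (![3,b1,b2,b3,b4,b5,b6] y) → ¬ adjB x y) →
    ∃ i : Fin 6, ∀ x y,
      (adjB x y || adjB (![3,b1,b2,b3,b4,b5,b6] x) (![3,b1,b2,b3,b4,b5,b6] y))
        = compB (tblT i x) (tblT i y) := by decide

set_option maxRecDepth 100000 in
set_option synthInstance.maxHeartbeats 0 in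
set_option synthInstance.maxSize 100000 in
set_option maxHeartbeats 16000000 in
theorem keyTab4 : ∀ b1 : Fin 7, b1 ≠ 4 → ∀ b2 : Fin 7, b2 ≠ 4 ∧ b2 ≠ b1 →
    ∀ b3 : Fin 7, b3 ≠ 4 ∧ b3 ≠ b1 ∧ b3 ≠ b2 →
    ∀ b4 : Fin 7, b4 ≠ 4 ∧ b4 ≠ b1 ∧ b4 ≠ b2 ∧ b4 ≠ b3 →
    ∀ b5 : Fin 7, b5 ≠ 4 ∧ b5 ≠ b1 ∧ b5 ≠ b2 ∧ b5 ≠ b3 ∧ b5 ≠ b4 →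
    ∀ b6 : Fin 7, b6 ≠ 4 ∧ b6 ≠ b1 ∧ b6 ≠ b2 ∧ b6 ≠ b3 ∧ b6 ≠ b4 ∧ b6 ≠ b5 →
    (∀ x y, adjB (![4,b1,b2,b3,b4,b5,b6] x) (![4,b1,b2,b3,b4,b5,b6] y) → ¬ adjB x y) →
    ∃ i : Fin 6, ∀ x y,
      (adjB x y || adjB (![4,b1,b2,b3,b4,b5,b6] x) (![4,b1,b2,b3,b4,b5,b6] y))
        = compB (tblT i x) (tblT i y) := by decide

set_option maxRecDepth 100000 in
set_option synthInstance.maxHeartbeats 0 in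
set_option synthInstance.maxSize 100000 in
set_option maxHeartbeats 16000000 in
theorem keyTab5 : ∀ b1 : Fin 7, b1 ≠ 5 → ∀ b2 : Fin 7, b2 ≠ 5 ∧ b2 ≠ b1 →
    ∀ b3 : Fin 7, b3 ≠ 5 ∧ b3 ≠ b1 ∧ b3 ≠ b2 →
    ∀ b4 : Fin 7, b4 ≠ 5 ∧ b4 ≠ b1 ∧ b4 ≠ b2 ∧ b4 ≠ b3 →
    ∀ b5 : Fin 7, b5 ≠ 5 ∧ b5 ≠ b1 ∧ b5 ≠ b2 ∧ b5 ≠ b3 ∧ b5 ≠ b4 →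
    ∀ b6 : Fin 7, b6 ≠ 5 ∧ b6 ≠ b1 ∧ b6 ≠ b2 ∧ b6 ≠ b3 ∧ b6 ≠ b4 ∧ b6 ≠ b5 →
    (∀ x y, adjB (![5,b1,b2,b3,b4,b5,b6] x) (![5,b1,b2,b3,b4,b5,b6] y) → ¬ adjB x y) →
    ∃ i : Fin 6, ∀ x y,
      (adjB x y || adjB (![5,b1,b2,b3,b4,b5,b6] x) (![5,b1,b2,b3,b4,b5,b6] y))
        = compB (tblT i x) (tblT i y) := by decide

set_option maxRecDepth 100000 in
set_option synthInstance.maxHeartbeats 0 in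
set_option synthInstance.maxSize 100000 in
set_option maxHeartbeats 16000000 in
theorem keyTab6 : ∀ b1 : Fin 7, b1 ≠ 6 → ∀ b2 : Fin 7, b2 ≠ 6 ∧ b2 ≠ b1 →
    ∀ b3 : Fin 7, b3 ≠ 6 ∧ b3 ≠ b1 ∧ b3 ≠ b2 →
    ∀ b4 : Fin 7, b4 ≠ 6 ∧ b4 ≠ b1 ∧ b4 ≠ b2 ∧ b4 ≠ b3 →
    ∀ b5 : Fin 7, b5 ≠ 6 ∧ b5 ≠ b1 ∧ b5 ≠ b2 ∧ b5 ≠ b3 ∧ b5 ≠ b4 →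
    ∀ b6 : Fin 7, b6 ≠ 6 ∧ b6 ≠ b1 ∧ b6 ≠ b2 ∧ b6 ≠ b3 ∧ b6 ≠ b4 ∧ b6 ≠ b5 →
    (∀ x y, adjB (![6,b1,b2,b3,b4,b5,b6] x) (![6,b1,b2,b3,b4,b5,b6] y) → ¬ adjB x y) →
    ∃ i : Fin 6, ∀ x y,
      (adjB x y || adjB (![6,b1,b2,b3,b4,b5,b6] x) (![6,b1,b2,b3,b4,b5,b6] y))
        = compB (tblT i x) (tblT i y) := by decide

theorem keyTab : ∀ b0 b1 : Fin 7, b1 ≠ b0 → ∀ b2 : Fin 7, b2 ≠ b0 ∧ b2 ≠ b1 →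
    ∀ b3 : Fin 7, b3 ≠ b0 ∧ b3 ≠ b1 ∧ b3 ≠ b2 →
    ∀ b4 : Fin 7, b4 ≠ b0 ∧ b4 ≠ b1 ∧ b4 ≠ b2 ∧ b4 ≠ b3 →
    ∀ b5 : Fin 7, b5 ≠ b0 ∧ b5 ≠ b1 ∧ b5 ≠ b2 ∧ b5 ≠ b3 ∧ b5 ≠ b4 →
    ∀ b6 : Fin 7, b6 ≠ b0 ∧ b6 ≠ b1 ∧ b6 ≠ b2 ∧ b6 ≠ b3 ∧ b6 ≠ b4 ∧ b6 ≠ b5 →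
    (∀ x y, adjB (![b0,b1,b2,b3,b4,b5,b6] x) (![b0,b1,b2,b3,b4,b5,b6] y) → ¬ adjB x y) →
    ∃ i : Fin 6, ∀ x y,
      (adjB x y || adjB (![b0,b1,b2,b3,b4,b5,b6] x) (![b0,b1,b2,b3,b4,b5,b6] y))
        = compB (tblT i x) (tblT i y) := by
  intro b0
  fin_cases b0
  exacts [keyTab0, keyTab1, keyTab2, keyTab3, keyTab4, keyTab5, keyTab6]

lemma ofIdx_toIdx : ∀ v : Vt, ofIdx (toIdx v) = v := by decide
lemma toIdx_ofIdx : ∀ u : Fin 7, toIdx (ofIdx u) = u := by decide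
lemma toIdx_inj : ∀ v w : Vt, toIdx v = toIdx w → v = w := by decide
lemma adj_iff : ∀ a b : Vt, adjB (toIdx a) (toIdx b) = true ↔ Gg.Adj a b := by decide
lemma comp_iff : ∀ u v : Fin 7, compB u v = true ↔ Ggᶜ.Adj (ofIdx u) (ofIdx v) := by decide
lemma tau_bij : ∀ i : Fin 6, Function.Bijective (tauF i) := by decide
lemma vecEq (f : Fin 7 → Fin 7) : ∀ x : Fin 7, ![f 0, f 1, f 2, f 3, f 4, f 5, f 6] x = f x := by
  intro x; fin_cases x <;> rfl

lemma edgeSum_adj (σ : Equiv.Perm Vt) (a b : Vt) :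
    (EdgeSum Gg σ).Adj a b ↔ Gg.Adj a b ∨ Gg.Adj (σ.symm a) (σ.symm b) := by
  show Gg.Adj a b ∨ (Gg.map σ.toEmbedding).Adj a b ↔ _
  refine or_congr Iff.rfl ?_
  rw [SimpleGraph.map_adj]
  constructor
  · rintro ⟨u, v, huv, rfl, rfl⟩
    simpa using huv
  · intro h
    exact ⟨σ.symm a, σ.symm b, h, σ.apply_symm_apply a, σ.apply_symm_apply b⟩

/-- Every embedding's edge sum is isomorphic (via one of six explicit maps) to `Ggᶜ`. -/
lemma main_iff (σ : Equiv.Perm Vt) (h : IsGraphEmbedding Gg σ) :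
    ∃ i : Fin 6, ∀ a b : Vt, (EdgeSum Gg σ).Adj a b ↔ Ggᶜ.Adj (tauF i a) (tauF i b) := by
  set B : Fin 7 → Fin 7 := fun j => toIdx (σ.symm (ofIdx j)) with hB
  have hBinj : Function.Injective B := by
    intro u v huv
    have h1 : σ.symm (ofIdx u) = σ.symm (ofIdx v) := toIdx_inj _ _ huv
    have h2 : ofIdx u = ofIdx v := σ.symm.injective h1
    have := congrArg toIdx h2
    rwa [toIdx_ofIdx, toIdx_ofIdx] at this
  have hne : ∀ u v : Fin 7, u ≠ v → B u ≠ B v := fun u v huv h' => huv (hBinj h')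
  have hemb : ∀ x y : Fin 7, adjB (B x) (B y) → ¬ adjB x y := by
    intro x y hxy hxy'
    have h1 : Gg.Adj (σ.symm (ofIdx x)) (σ.symm (ofIdx y)) := (adj_iff _ _).mp hxy
    have h2 := h _ _ h1
    rw [σ.apply_symm_apply, σ.apply_symm_apply] at h2
    have h3 : Gg.Adj (ofIdx x) (ofIdx y) := by
      have := (adj_iff (ofIdx x) (ofIdx y))
      rw [toIdx_ofIdx, toIdx_ofIdx] at this
      exact this.mp hxy'
    exact h2 h3
  have hembv : ∀ x y : Fin 7,
      adjB (![B 0, B 1, B 2, B 3, B 4, B 5, B 6] x) (![B 0, B 1, B 2, B 3, B 4, B 5, B 6] y) →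
      ¬ adjB x y := by
    intro x y hxy
    rw [vecEq B x, vecEq B y] at hxy
    exact hemb x y hxy
  obtain ⟨i, hi⟩ := keyTab (B 0) (B 1) (hne 1 0 (by decide))
    (B 2) ⟨hne 2 0 (by decide), hne 2 1 (by decide)⟩
    (B 3) ⟨hne 3 0 (by decide), hne 3 1 (by decide), hne 3 2 (by decide)⟩
    (B 4) ⟨hne 4 0 (by decide), hne 4 1 (by decide), hne 4 2 (by decide), hne 4 3 (by decide)⟩
    (B 5) ⟨hne 5 0 (by decide), hne 5 1 (by decide), hne 5 2 (by decide), hne 5 3 (by decide),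
      hne 5 4 (by decide)⟩
    (B 6) ⟨hne 6 0 (by decide), hne 6 1 (by decide), hne 6 2 (by decide), hne 6 3 (by decide),
      hne 6 4 (by decide), hne 6 5 (by decide)⟩
    hembv
  refine ⟨i, fun a b => ?_⟩
  have hi' := hi (toIdx a) (toIdx b)
  rw [vecEq B, vecEq B] at hi'
  have hBa : B (toIdx a) = toIdx (σ.symm a) := by rw [hB]; simp only [ofIdx_toIdx]
  have hBb : B (toIdx b) = toIdx (σ.symm b) := by rw [hB]; simp only [ofIdx_toIdx]
  rw [hBa, hBb] at hi'
  rw [edgeSum_adj]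
  constructor
  · intro hadj
    have : (adjB (toIdx a) (toIdx b) || adjB (toIdx (σ.symm a)) (toIdx (σ.symm b))) = true := by
      rcases hadj with h' | h'
      · rw [Bool.or_eq_true]; exact Or.inl ((adj_iff _ _).mpr h')
      · rw [Bool.or_eq_true]; exact Or.inr ((adj_iff _ _).mpr h')
    rw [hi'] at this
    have := (comp_iff _ _).mp this
    exact this
  · intro hadj
    have hc : compB (tblT i (toIdx a)) (tblT i (toIdx b)) = true := (comp_iff _ _).mpr hadj
    rw [← hi', Bool.or_eq_true] at hc
    rcases hc with h' | h'
    · exact Or.inl ((adj_iff _ _).mp h')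
    · exact Or.inr ((adj_iff _ _).mp h')

/-- An explicit isomorphism `EdgeSum Gg σ ≃g Ggᶜ` for any embedding. -/
noncomputable def isoToComp (σ : Equiv.Perm Vt) (h : IsGraphEmbedding Gg σ) :
    EdgeSum Gg σ ≃g Ggᶜ := by
  choose i hi using main_iff σ h
  exact ⟨Equiv.ofBijective (tauF i) (tau_bij i), fun {a b} => (hi a b).symm⟩

def σ₀fun : Vt → Vt := fun v => ofIdx (![0,3,5,1,4,2,6] (toIdx v))

/-- `C₃ ∪ C₄` is embeddable in its complement and uniquely embeddable: all edge-sum graphs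
over embeddings are pairwise isomorphic. -/
theorem c3_c4_uniquely_embeddable :
    (∃ σ : Equiv.Perm (ZMod 3 ⊕ ZMod 4),
        IsGraphEmbedding (DisjUnion (CycGraph 3) (CycGraph 4)) σ) ∧
    ∀ σ₁ σ₂ : Equiv.Perm (ZMod 3 ⊕ ZMod 4),
      IsGraphEmbedding (DisjUnion (CycGraph 3) (CycGraph 4)) σ₁ →
      IsGraphEmbedding (DisjUnion (CycGraph 3) (CycGraph 4)) σ₂ →
      Nonempty (EdgeSum (DisjUnion (CycGraph 3) (CycGraph 4)) σ₁ ≃g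
        EdgeSum (DisjUnion (CycGraph 3) (CycGraph 4)) σ₂) := by
  constructor
  · refine ⟨Equiv.ofBijective σ₀fun (by decide), ?_⟩
    show IsGraphEmbedding Gg _
    decide
  · intro σ₁ σ₂ h₁ h₂
    exact ⟨(isoToComp σ₁ h₁).trans (isoToComp σ₂ h₂).symm⟩
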